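/- arXiv:2209.07557 — 2 statements merged into one kernel-verified Lean document; each statement's English description precedes it below -/
import Mathlib

section
/- Let S = (W_1,...,W_k) be a minimum-length covering strategy for a tree T with paths P(W_i) and forests F(W_i) as in the structure lemma. Then for every pair j ≠ l, every vertex lying in both V(F(W_j)) and V(F(W_l)) lies in the union of the vertex sets of the paths P(W_1),...,P(W_k). -/
open Finset

variable {V : Type*}

/-- The list of consecutive steps of a walk given as a list of vertices. -/
def wsteps (W : List V) : List (V × V) := W.zip W.tail

/-- A walk on a graph: a nonempty list of vertices in which consecutive
entries are equal or adjacent. -/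
def IsWalk (G : SimpleGraph V) (W : List V) : Prop :=
  W ≠ [] ∧ ∀ p ∈ wsteps W, p.1 = p.2 ∨ G.Adj p.1 p.2

/-- The length of a walk: the number of position-changing moves. -/
def wlen [DecidableEq V] (W : List V) : ℕ :=
  (wsteps W).countP (fun p => decide (p.1 ≠ p.2))

/-- The number of times a walk traverses the edge `{x, y}` (in either direction). -/
def trav [DecidableEq V] (W : List V) (x y : V) : ℕ :=
  (wsteps W).countP (fun p => decide ((p.1 = x ∧ p.2 = y) ∨ (p.1 = y ∧ p.2 = x)))

/-- The number of times a walk traverses the edge `(x, y)` from `x` to `y`. -/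
def dirTrav [DecidableEq V] (W : List V) (x y : V) : ℕ :=
  (wsteps W).countP (fun p => decide (p.1 = x ∧ p.2 = y))

/-- A tuple of walks covers the graph: every vertex appears in some walk. -/
def Covers {k : ℕ} (S : Fin k → List V) : Prop := ∀ v : V, ∃ i, v ∈ S i

/-- The total length of a strategy: the sum of the lengths of the walks. -/
def slen [DecidableEq V] {k : ℕ} (S : Fin k → List V) : ℕ := ∑ i, wlen (S i)

/-- A minimum-length covering strategy: a tuple of walks covering all vertices whose
total length is no larger than that of any covering strategy with the same starts. -/
def IsMinCover [DecidableEq V] (G : SimpleGraph V) {k : ℕ} (S : Fin k → List V) : Prop :=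
  (∀ i, IsWalk G (S i)) ∧ Covers S ∧
    ∀ S' : Fin k → List V, (∀ i, IsWalk G (S' i)) → Covers S' →
      (∀ i, (S' i).head? = (S i).head?) → slen S ≤ slen S'

/-- The forest of twice-traversed edges of walk W, as a subgraph of G. -/
def Fgraph [DecidableEq V] (G : SimpleGraph V) (W : List V) : SimpleGraph V :=
  SimpleGraph.fromRel (fun x y => G.Adj x y ∧ trav W x y = 2)

section AuxLemmas

variable [DecidableEq V]

lemma wsteps_cons_head {b : V} {B : List V} (hB : B ≠ []) :
    wsteps (b :: B) = (b, B.head hB) :: wsteps B := by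
  cases B with
  | nil => simp at hB
  | cons c T => rfl

lemma wsteps_append {A B : List V} (hA : A ≠ []) (hB : B ≠ []) :
    wsteps (A ++ B) = wsteps A ++ (A.getLast hA, B.head hB) :: wsteps B := by
  induction A with
  | nil => simp at hA
  | cons a A ih =>
    cases A with
    | nil => simpa [show wsteps [a] = [] from rfl] using wsteps_cons_head hB
    | cons a' T =>
      have hA' : (a' :: T : List V) ≠ [] := by simp
      rw [List.cons_append, wsteps_cons_head (by simp : ((a' :: T) ++ B : List V) ≠ []),
        ih hA', wsteps_cons_head hA']
      simp [List.getLast_cons, List.head_append_of_ne_nil hA']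

lemma head?_append_left {A : List V} (B : List V) (hA : A ≠ []) :
    (A ++ B).head? = A.head? := by cases A <;> simp_all

lemma mem_of_mem_wsteps {p : V × V} {L : List V} (h : p ∈ wsteps L) :
    p.1 ∈ L ∧ p.2 ∈ L := by
  obtain ⟨x, y⟩ := p
  have h1 := List.of_mem_zip h
  exact ⟨h1.1, List.mem_of_mem_tail h1.2⟩

lemma exists_first_split {v : V} {L : List V} (h : v ∈ L) :
    ∃ A B, L = A ++ v :: B ∧ v ∉ A := by
  induction L with
  | nil => simp at h
  | cons a L ih =>
    by_cases hav : a = v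
    · exact ⟨[], L, by simp [hav], by simp⟩
    · rcases List.mem_cons.mp h with h | h
      · exact absurd h.symm hav
      · obtain ⟨A, B, hL, hvA⟩ := ih h
        exact ⟨a :: A, B, by simp [hL], by simp [hvA, Ne.symm hav]⟩

lemma mem_wsteps_split {x y : V} {L : List V} (h : (x, y) ∈ wsteps L) :
    ∃ A B, L = A ++ x :: y :: B := by
  induction L with
  | nil => simp [wsteps] at h
  | cons a L ih =>
    cases L with
    | nil => simp [wsteps] at h
    | cons b T =>
      rcases List.mem_cons.mp h with h | h
      · obtain ⟨h1, h2⟩ := Prod.ext_iff.mp h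
        subst h1; subst h2
        exact ⟨[], T, rfl⟩
      · obtain ⟨A, B, hL⟩ := ih h
        exact ⟨a :: A, B, by simp [hL]⟩

lemma trav_comm (W : List V) (x y : V) : trav W x y = trav W y x := by
  unfold trav
  apply List.countP_congr
  intro p _
  simp only [decide_eq_true_eq]
  tauto

lemma mem_of_trav_ne_zero {W : List V} {x y : V}
    (h : trav W x y ≠ 0) : x ∈ W ∧ y ∈ W := by
  unfold trav at h
  rw [Ne, List.countP_eq_zero] at h
  push_neg at h
  obtain ⟨p, hp, hpred⟩ := h
  have hm := mem_of_mem_wsteps hp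
  simp only [decide_eq_true_eq] at hpred
  rcases hpred with ⟨h1, h2⟩ | ⟨h1, h2⟩
  · exact ⟨h1 ▸ hm.1, h2 ▸ hm.2⟩
  · exact ⟨h2 ▸ hm.2, h1 ▸ hm.1⟩

lemma walk_stays {G : SimpleGraph V} {u v : V}
    (hbr : ¬(G \ SimpleGraph.fromEdgeSet {s(v, u)}).Reachable v u) :
    ∀ L : List V, (∀ p ∈ wsteps L, p.1 = p.2 ∨ G.Adj p.1 p.2) →
      (v, u) ∉ wsteps L →
      ∀ a, (G \ SimpleGraph.fromEdgeSet {s(v, u)}).Reachable v a → L.head? = some a →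
      ∀ x ∈ L, (G \ SimpleGraph.fromEdgeSet {s(v, u)}).Reachable v x := by
  intro L
  induction L with
  | nil => simp
  | cons a L ih =>
    intro hvalid hnm b hRb hhead x hx
    simp only [List.head?_cons, Option.some.injEq] at hhead
    subst hhead
    rcases List.mem_cons.mp hx with rfl | hx
    · exact hRb
    · cases L with
      | nil => simp at hx
      | cons c T =>
        have hstep : ((a, c) : V × V) ∈ wsteps (a :: c :: T) := by
          simp [wsteps]
        have hRc : (G \ SimpleGraph.fromEdgeSet {s(v, u)}).Reachable v c := by
          rcases hvalid _ hstep with heq | hadj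
          · exact (show a = c from heq) ▸ hRb
          · refine hRb.trans (SimpleGraph.Adj.reachable ?_)
            rw [SimpleGraph.sdiff_adj]
            refine ⟨hadj, ?_⟩
            rw [SimpleGraph.fromEdgeSet_adj]
            rintro ⟨he, hne⟩
            simp only [Set.mem_singleton_iff, Sym2.eq, Sym2.rel_iff', Prod.mk.injEq,
              Prod.swap_prod_mk] at he
            rcases he with ⟨rfl, rfl⟩ | ⟨rfl, rfl⟩
            · exact hnm hstep
            · exact hbr hRb
        have hsub : ∀ p ∈ wsteps (c :: T), p ∈ wsteps (a :: c :: T) := by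
          intro p hp
          rw [show wsteps (a :: c :: T) = (a, c) :: wsteps (c :: T) from rfl]
          exact List.mem_cons_of_mem _ hp
        exact ih (fun p hp => hvalid p (hsub p hp))
          (fun hc => hnm (hsub _ hc)) c hRc rfl x hx

lemma sum_two_update {k : ℕ} (f : Fin k → ℕ) (j l : Fin k) (hjl : j ≠ l) (a b : ℕ) :
    (∑ i, Function.update (Function.update f l b) j a i) + f j + f l
      = (∑ i, f i) + a + b := by
  rw [Finset.sum_update_of_mem (Finset.mem_univ j)]
  rw [Finset.sum_update_of_mem (by simp [hjl.symm] : l ∈ Finset.univ \ {j})]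
  have h1 : ∑ i, f i = f j + ∑ i ∈ Finset.univ \ {j}, f i :=
    Finset.sum_eq_add_sum_sdiff_singleton_of_mem (Finset.mem_univ j) f
  have h2 : ∑ i ∈ Finset.univ \ {j}, f i
      = f l + ∑ i ∈ (Finset.univ \ {j}) \ {l}, f i :=
    Finset.sum_eq_add_sum_sdiff_singleton_of_mem (by simp [hjl.symm]) f
  omega

lemma insert_loop (E M F : List V) (v : V)
    (hEne : E ≠ []) (hMne : M ≠ [])
    (hhead : M.head hMne = v) (hlast : M.getLast hMne = v) :
    wlen (E ++ (M ++ F)) = wlen (E ++ v :: F) + wlen M ∧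
    (∀ p ∈ wsteps (E ++ (M ++ F)), p ∈ wsteps (E ++ v :: F) ∨ p ∈ wsteps M) ∧
    (∀ x ∈ E ++ v :: F, x ∈ E ++ (M ++ F)) ∧
    (E ++ (M ++ F)).head? = (E ++ v :: F).head? := by
  have hv : v ∈ M := hlast ▸ List.getLast_mem hMne
  cases F with
  | nil =>
    have h1 : wsteps (E ++ (M ++ [])) = wsteps E ++ (E.getLast hEne, v) :: wsteps M := by
      rw [List.append_nil, wsteps_append hEne hMne, hhead]
    have h2 : wsteps (E ++ [v]) = wsteps E ++ (E.getLast hEne, v) :: wsteps [v] := by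
      rw [wsteps_append hEne (by simp)]; rfl
    refine ⟨?_, ?_, ?_, ?_⟩
    · unfold wlen
      rw [h1, h2, List.countP_append, List.countP_append, List.countP_cons, List.countP_cons]
      simp [wsteps]
      omega
    · intro p hp
      rw [h1] at hp; rw [h2]
      rcases List.mem_append.mp hp with h | h
      · exact Or.inl (List.mem_append.mpr (Or.inl h))
      · rcases List.mem_cons.mp h with h | h
        · exact Or.inl (List.mem_append.mpr (Or.inr (by simp [h])))
        · exact Or.inr h
    · intro x hx
      simp only [List.mem_append, List.mem_cons, List.mem_singleton] at hx ⊢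
      rcases hx with h | h | h
      · exact Or.inl h
      · exact Or.inr (Or.inl (h ▸ hv))
      · simp at h
    · rw [head?_append_left _ hEne, head?_append_left _ hEne]
  | cons f0 F' =>
    have hMF : (M ++ f0 :: F' : List V) ≠ [] := by simp [hMne]
    have hheadMF : (M ++ f0 :: F').head hMF = v := by
      rw [List.head_append_of_ne_nil hMne]; exact hhead
    have h1 : wsteps (E ++ (M ++ f0 :: F'))
        = wsteps E ++ (E.getLast hEne, v) :: (wsteps M ++ (v, f0) :: wsteps (f0 :: F')) := by
      rw [wsteps_append hEne hMF, hheadMF, wsteps_append hMne (by simp), hlast]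
      rfl
    have h2 : wsteps (E ++ v :: f0 :: F')
        = wsteps E ++ (E.getLast hEne, v) :: ((v, f0) :: wsteps (f0 :: F')) := by
      rw [wsteps_append hEne (by simp)]
      rfl
    refine ⟨?_, ?_, ?_, ?_⟩
    · unfold wlen
      rw [h1, h2]
      simp only [List.countP_append, List.countP_cons]
      omega
    · intro p hp
      rw [h1] at hp; rw [h2]
      simp only [List.mem_append, List.mem_cons] at hp ⊢
      tauto
    · intro x hx
      simp only [List.mem_append, List.mem_cons] at hx ⊢
      rcases hx with h | h | h
      · exact Or.inl h
      · exact Or.inr (Or.inl (h ▸ hv))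
      · exact Or.inr (Or.inr h)
    · rw [head?_append_left _ hEne, head?_append_left _ hEne]

end AuxLemmas

/-- Structure lemma (part (d)): for j ≠ l, any vertex lying in both forests
F(W_j) and F(W_l) lies on the union of the paths P(W₁),…,P(Wₖ). -/
theorem stmt5 {V : Type*} [Fintype V] [DecidableEq V] (G : SimpleGraph V) (hT : G.IsTree)
    {k : ℕ} (S P : Fin k → List V) (hS : IsMinCover G S)
    (hP : ∀ i, (P i).Nodup ∧ (P i).Chain' G.Adj ∧ (P i).head? = (S i).head? ∧
      (∀ x ∈ P i, x ∈ S i) ∧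
      ∀ x y : V, G.Adj x y → (trav (S i) x y = 1 ↔ trav (P i) x y = 1))
    (j l : Fin k) (hjl : j ≠ l) (v : V)
    (hvj : ∃ w, (Fgraph G (S j)).Adj v w) (hvl : ∃ w, (Fgraph G (S l)).Adj v w) :
    ∃ i : Fin k, v ∈ P i := by
  classical
  by_contra hcon
  push_neg at hcon
  have hO1 : ∀ i, (S i).head? ≠ some v := by
    intro i hi
    apply hcon i
    apply List.mem_of_mem_head?
    rw [Option.mem_def, (hP i).2.2.1, hi]
  have hO2 : ∀ i x, G.Adj v x → trav (S i) v x ≠ 1 := by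
    intro i x hadj h1
    have h2 := ((hP i).2.2.2.2 v x hadj).mp h1
    exact hcon i (mem_of_trav_ne_zero (show trav (P i) v x ≠ 0 by omega)).1
  have hvS : ∀ i : Fin k, (∃ w, (Fgraph G (S i)).Adj v w) → v ∈ S i := by
    rintro i ⟨w, hw⟩
    unfold Fgraph at hw
    rw [SimpleGraph.fromRel_adj] at hw
    rcases hw.2 with ⟨_, ht⟩ | ⟨_, ht⟩
    · exact (mem_of_trav_ne_zero (show trav (S i) v w ≠ 0 by omega)).1
    · exact (mem_of_trav_ne_zero (show trav (S i) w v ≠ 0 by omega)).2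
  have hvSj := hvS j hvj
  have hvSl := hvS l hvl
  obtain ⟨A, B, hW, hvA⟩ := exists_first_split hvSl
  have hAne : A ≠ [] := by
    rintro rfl
    exact hO1 l (by simp [hW])
  have hBne : (v :: B : List V) ≠ [] := by simp
  set u := A.getLast hAne with hu
  have huA : u ∈ A := List.getLast_mem hAne
  have huv : u ≠ v := fun h => hvA (h ▸ huA)
  have hsteps1 : wsteps (S l) = wsteps A ++ (u, v) :: wsteps (v :: B) := by
    rw [hW, wsteps_append hAne hBne, ← hu]
    rfl
  have hadj : G.Adj u v := by
    rcases (hS.1 l).2 (u, v) (by rw [hsteps1]; simp) with h | h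
    · exact absurd h huv
    · exact h
  have hbr : ¬(G \ SimpleGraph.fromEdgeSet {s(v, u)}).Reachable v u :=
    (SimpleGraph.isBridge_iff.mp
      ((SimpleGraph.isAcyclic_iff_forall_adj_isBridge.mp hT.IsAcyclic) hadj.symm))
  have hvalidB : ∀ p ∈ wsteps (v :: B), p.1 = p.2 ∨ G.Adj p.1 p.2 := by
    intro p hp
    exact (hS.1 l).2 p (by rw [hsteps1]; simp [hp])
  have hret : ((v, u) : V × V) ∈ wsteps (v :: B) := by
    by_contra hnm
    have hR := walk_stays hbr (v :: B) hvalidB hnm v (SimpleGraph.Reachable.refl v) rfl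
    apply hO2 l u hadj.symm
    rw [trav_comm]
    unfold trav
    rw [hsteps1, List.countP_append, List.countP_cons]
    have hA0 : List.countP (fun p => decide ((p.1 = u ∧ p.2 = v) ∨ (p.1 = v ∧ p.2 = u)))
        (wsteps A) = 0 := by
      apply List.countP_eq_zero.mpr
      intro p hp
      have hm := mem_of_mem_wsteps hp
      simp only [decide_eq_true_eq]
      rintro (⟨h1, h2⟩ | ⟨h1, h2⟩)
      · exact hvA (h2 ▸ hm.2)
      · exact hvA (h1 ▸ hm.1)
    have hB0 : List.countP (fun p => decide ((p.1 = u ∧ p.2 = v) ∨ (p.1 = v ∧ p.2 = u)))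
        (wsteps (v :: B)) = 0 := by
      apply List.countP_eq_zero.mpr
      intro p hp
      have hm := mem_of_mem_wsteps hp
      simp only [decide_eq_true_eq]
      rintro (⟨h1, h2⟩ | ⟨h1, h2⟩)
      · exact hbr (h1 ▸ hR p.1 hm.1)
      · apply hnm
        have hpe : p = (v, u) := by rw [← h1, ← h2]
        exact hpe ▸ hp
    rw [hA0, hB0]
    simp
  obtain ⟨X, Y', hXY⟩ := mem_wsteps_split hret
  have hMne : (X ++ [v] : List V) ≠ [] := by simp
  set M := X ++ [v] with hM
  have hMY : M ++ u :: Y' = v :: B := by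
    rw [hM, List.append_assoc, List.singleton_append, ← hXY]
  have hWl : S l = A ++ (M ++ u :: Y') := by rw [hW, hMY]
  have hMYne : (M ++ u :: Y' : List V) ≠ [] := by simp [hMne]
  have hheadM : M.head hMne = v := by
    have h1 : M.head? = some v := by
      rw [← head?_append_left (u :: Y') hMne, hMY]
      rfl
    rwa [List.head?_eq_head hMne, Option.some.injEq] at h1
  have hheadMY : (M ++ u :: Y').head hMYne = v := by
    rw [List.head_append_of_ne_nil hMne]
    exact hheadM
  have hlastM : M.getLast hMne = v := List.getLast_append _
  obtain ⟨E, F, hSj, hvE⟩ := exists_first_split hvSj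
  have hEne : E ≠ [] := by
    rintro rfl
    exact hO1 j (by simp [hSj])
  obtain ⟨hlen_j, hsub_j, hcov_j, hhead_j⟩ := insert_loop E M F v hEne hMne hheadM hlastM
  have hstepsW : wsteps (S l)
      = wsteps A ++ (u, v) :: (wsteps M ++ (v, u) :: wsteps (u :: Y')) := by
    rw [hWl, wsteps_append hAne hMYne, hheadMY, wsteps_append hMne (by simp), hlastM, ← hu]
    rfl
  have hstepslnew : wsteps (A ++ u :: Y') = wsteps A ++ (u, u) :: wsteps (u :: Y') := by
    rw [wsteps_append hAne (by simp), ← hu]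
    rfl
  have hlenl : wlen (S l) = wlen (A ++ u :: Y') + wlen M + 2 := by
    unfold wlen
    rw [hstepsW, hstepslnew]
    simp only [List.countP_append, List.countP_cons]
    simp [huv, Ne.symm huv]
    omega
  set S' : Fin k → List V :=
    Function.update (Function.update S l (A ++ u :: Y')) j (E ++ (M ++ F)) with hS'def
  have hS'j : S' j = E ++ (M ++ F) := by rw [hS'def]; simp
  have hS'l : S' l = A ++ u :: Y' := by
    rw [hS'def, Function.update_of_ne (Ne.symm hjl), Function.update_self]
  have hS'other : ∀ i, i ≠ j → i ≠ l → S' i = S i := by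
    intro i h1 h2
    rw [hS'def, Function.update_of_ne h1, Function.update_of_ne h2]
  have hvalid' : ∀ i, IsWalk G (S' i) := by
    intro i
    by_cases h1 : i = j
    · rw [h1, hS'j]
      refine ⟨by simp [hEne], ?_⟩
      intro p hp
      rcases hsub_j p hp with h | h
      · rw [← hSj] at h
        exact (hS.1 j).2 p h
      · exact (hS.1 l).2 p (by rw [hstepsW]; simp [h])
    · by_cases h2 : i = l
      · rw [h2, hS'l]
        refine ⟨by simp [hAne], ?_⟩
        intro p hp
        rw [hstepslnew] at hp
        rcases List.mem_append.mp hp with h | h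
        · exact (hS.1 l).2 p (by rw [hstepsW]; simp [h])
        · rcases List.mem_cons.mp h with h | h
          · exact Or.inl (by rw [h])
          · exact (hS.1 l).2 p (by rw [hstepsW]; simp [h])
      · rw [hS'other i h1 h2]
        exact hS.1 i
  have hcov' : Covers S' := by
    intro x
    obtain ⟨i, hx⟩ := hS.2.1 x
    by_cases h1 : i = j
    · rw [h1] at hx
      exact ⟨j, by rw [hS'j]; exact hcov_j x (hSj ▸ hx)⟩
    · by_cases h2 : i = l
      · rw [h2, hWl] at hx
        rcases List.mem_append.mp hx with h | h
        · exact ⟨l, by rw [hS'l]; simp [h]⟩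
        · rcases List.mem_append.mp h with h | h
          · exact ⟨j, by rw [hS'j]; simp [h]⟩
          · exact ⟨l, by rw [hS'l]; simp [h]⟩
      · exact ⟨i, by rw [hS'other i h1 h2]; exact hx⟩
  have hhead' : ∀ i, (S' i).head? = (S i).head? := by
    intro i
    by_cases h1 : i = j
    · rw [h1, hS'j, hSj]
      exact hhead_j
    · by_cases h2 : i = l
      · rw [h2, hS'l, hWl, head?_append_left _ hAne, head?_append_left _ hAne]
      · rw [hS'other i h1 h2]
  have hkey := hS.2.2 S' hvalid' hcov' hhead'
  have hslen : slen S' + 2 = slen S := by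
    unfold slen
    have e1 : ∀ i, wlen (S' i)
        = Function.update (Function.update (fun i => wlen (S i)) l
            (wlen (A ++ u :: Y'))) j (wlen (E ++ (M ++ F))) i := by
      intro i
      by_cases h1 : i = j
      · rw [h1, hS'j, Function.update_self]
      · by_cases h2 : i = l
        · rw [h2, hS'l, Function.update_of_ne (Ne.symm hjl), Function.update_self]
        · rw [hS'other i h1 h2, Function.update_of_ne h1, Function.update_of_ne h2]
    rw [Finset.sum_congr rfl (fun i _ => e1 i)]
    have hsum := sum_two_update (fun i => wlen (S i)) j l hjl
      (wlen (E ++ (M ++ F))) (wlen (A ++ u :: Y'))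
    rw [← hSj] at hlen_j
    have hsum' : Finset.univ.sum
          (Function.update (Function.update (fun i => wlen (S i)) l
            (wlen (A ++ u :: Y'))) j (wlen (E ++ (M ++ F)))) + wlen (S j) + wlen (S l)
        = (∑ i, wlen (S i)) + wlen (E ++ (M ++ F)) + wlen (A ++ u :: Y') := hsum
    omega
  omega
end

section
/- The minimum length of a covering strategy for a tree T with k robots at given starting positions equals the minimum over all k-tuples of paths (P_1,...,P_k) in T (with P_i starting at robot i's starting vertex) of Σ_i l(P_i) + 2·|V(T) \ ∪_i V(P_i)|. -/
open Finset

variable {V : Type*}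

-- basic list lemmas
lemma wsteps_nil : wsteps ([] : List V) = [] := rfl
lemma wsteps_singleton (a : V) : wsteps [a] = [] := rfl
lemma wsteps_cons_cons (a b : V) (l : List V) :
    wsteps (a :: b :: l) = (a, b) :: wsteps (b :: l) := rfl

lemma mem_of_wsteps {W : List V} {p : V × V} (hp : p ∈ wsteps W) :
    p.1 ∈ W ∧ p.2 ∈ W := by
  induction W with
  | nil => simp [wsteps_nil] at hp
  | cons a l ih =>
    cases l with
    | nil => simp [wsteps_singleton] at hp
    | cons b t =>
      rw [wsteps_cons_cons] at hp
      rcases List.mem_cons.1 hp with h | h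
      · subst h; simp
      · exact ⟨List.mem_cons_of_mem _ (ih h).1, List.mem_cons_of_mem _ (ih h).2⟩

lemma chain'_wsteps {R : V → V → Prop} {W : List V} (h : W.Chain' R) :
    ∀ p ∈ wsteps W, R p.1 p.2 := by
  induction W with
  | nil => simp [wsteps_nil]
  | cons a l ih =>
    cases l with
    | nil => simp [wsteps_singleton]
    | cons b t =>
      rw [wsteps_cons_cons]
      rcases List.isChain_cons_cons.1 h with ⟨hab, ht⟩
      intro p hp
      rcases List.mem_cons.1 hp with h | h
      · subst h; exact hab
      · exact ih ht p h

lemma mem_wsteps_iff {W : List V} {p : V × V} :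
    p ∈ wsteps W ↔ ∃ i, ∃ h : i + 1 < W.length, W[i] = p.1 ∧ W[i+1] = p.2 := by
  unfold wsteps
  rw [List.mem_iff_getElem]
  constructor
  · rintro ⟨i, hi, he⟩
    rw [List.getElem_zip] at he
    have hlen : i + 1 < W.length := by
      have := hi
      simp [List.length_zip, List.length_tail] at this
      omega
    refine ⟨i, hlen, ?_, ?_⟩
    · rw [← he]
    · rw [← he]; simp [List.getElem_tail]
  · rintro ⟨i, hi, h1, h2⟩
    have hlen : i < (W.zip W.tail).length := by
      simp [List.length_zip, List.length_tail]; omega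
    refine ⟨i, hlen, ?_⟩
    rw [List.getElem_zip]
    simp [List.getElem_tail, h1, h2]

lemma not_rev_steps {W : List V} (hN : W.Nodup) {x y : V}
    (h1 : (x, y) ∈ wsteps W) (h2 : (y, x) ∈ wsteps W) : False := by
  rw [mem_wsteps_iff] at h1 h2
  obtain ⟨i, hi, hx1, hy1⟩ := h1
  obtain ⟨j, hj, hy2, hx2⟩ := h2
  have e1 : i = j + 1 := by
    rw [← hN.getElem_inj_iff (hi := by omega) (hj := hj)]
    rw [hx1, hx2]
  have e2 : i + 1 = j := by
    rw [← hN.getElem_inj_iff (hi := hi) (hj := by omega)]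
    rw [hy1, hy2]
  omega

/-- Number of steps of a walk crossing the cut defined by `s`. -/
def crossN (s : V → Bool) (W : List V) : ℕ :=
  (wsteps W).countP (fun p => s p.1 != s p.2)

lemma crossN_parity (s : V → Bool) :
    ∀ (l : List V) (a : V),
      crossN s (a :: l) % 2 = if s a = s ((a :: l).getLast (by simp)) then 0 else 1 := by
  intro l
  induction l with
  | nil => intro a; simp [crossN, wsteps_singleton]
  | cons b t ih =>
    intro a
    have hstep : crossN s (a :: b :: t) = (if s a != s b then 1 else 0) + crossN s (b :: t) := by
      simp only [crossN, wsteps_cons_cons, List.countP_cons]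
      split <;> simp_all <;> omega
    have hgl : (a :: b :: t).getLast (by simp) = (b :: t).getLast (by simp) := by
      simp [List.getLast_cons]
    rw [hstep, hgl, Nat.add_mod, ih b]
    cases hsa : s a <;> cases hsb : s b <;>
      cases hsgl : s ((b :: t).getLast (by simp : b :: t ≠ [])) <;> simp_all

lemma crossN_exists_step (s : V → Bool) :
    ∀ (l : List V) (a b : V), b ∈ a :: l → s b ≠ s a →
      ∃ p ∈ wsteps (a :: l), s p.1 ≠ s p.2 := by
  intro l
  induction l with
  | nil =>
    intro a b hb hs
    simp at hb; subst hb; exact absurd rfl hs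
  | cons c t ih =>
    intro a b hb hs
    by_cases hac : s a = s c
    · have hb' : b ∈ c :: t := by
        rcases List.mem_cons.1 hb with h | h
        · subst h; exact absurd rfl hs
        · exact h
      obtain ⟨p, hp, hps⟩ := ih c b hb' (by rw [hac] at hs; exact hs)
      exact ⟨p, by rw [wsteps_cons_cons]; exact List.mem_cons_of_mem _ hp, hps⟩
    · exact ⟨(a, c), by rw [wsteps_cons_cons]; simp, fun h => hac h⟩

lemma crossN_pos (s : V → Bool) {l : List V} {a b : V} (hb : b ∈ a :: l)
    (hs : s b ≠ s a) : 1 ≤ crossN s (a :: l) := by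
  obtain ⟨p, hp, hps⟩ := crossN_exists_step s l a b hb hs
  have : 0 < (wsteps (a :: l)).countP (fun p => s p.1 != s p.2) :=
    List.countP_pos_iff.2 ⟨p, hp, by simpa using hps⟩
  exact this

section Cut

open SimpleGraph

variable {G : SimpleGraph V}

/-- The graph with one edge deleted. -/
abbrev delE (G : SimpleGraph V) (e : Sym2 V) : SimpleGraph V := G \ SimpleGraph.fromEdgeSet {e}

lemma delE_adj {e : Sym2 V} {p q : V} :
    (delE G e).Adj p q ↔ G.Adj p q ∧ s(p, q) ≠ e := by
  simp only [delE, sdiff_adj, fromEdgeSet_adj, Set.mem_singleton_iff]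
  constructor
  · rintro ⟨h1, h2⟩
    exact ⟨h1, fun he => h2 ⟨he, h1.ne⟩⟩
  · rintro ⟨h1, h2⟩
    exact ⟨h1, fun he => h2 he.1⟩

lemma cut_reach (hc : G.Preconnected) {x y : V} (hxy : G.Adj x y) (z : V) :
    (delE G s(x, y)).Reachable x z ∨ (delE G s(x, y)).Reachable y z := by
  obtain ⟨w⟩ := hc x z
  have key : ∀ (a b : V) (_ : G.Walk a b),
      ((delE G s(x, y)).Reachable x a ∨ (delE G s(x, y)).Reachable y a) →
      ((delE G s(x, y)).Reachable x b ∨ (delE G s(x, y)).Reachable y b) := by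
    intro a b w
    induction w with
    | nil => exact id
    | @cons a c b hac p ih =>
      intro ha
      apply ih
      by_cases he : s(a, c) = s(x, y)
      · rcases Sym2.eq_iff.1 he with ⟨rfl, rfl⟩ | ⟨rfl, rfl⟩
        · right; exact Reachable.refl _
        · left; exact Reachable.refl _
      · have hadj : (delE G s(x, y)).Adj a c := delE_adj.2 ⟨hac, he⟩
        rcases ha with h | h
        · exact Or.inl (h.trans hadj.reachable)
        · exact Or.inr (h.trans hadj.reachable)
  exact key x z w (Or.inl (Reachable.refl _))

lemma cut_not_both (ht : G.IsAcyclic) {x y : V} (hxy : G.Adj x y) {z : V} :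
    ¬((delE G s(x, y)).Reachable x z ∧ (delE G s(x, y)).Reachable y z) := by
  rintro ⟨h1, h2⟩
  have hb : G.IsBridge s(x, y) := (isAcyclic_iff_forall_adj_isBridge.1 ht) hxy
  exact (isBridge_iff.1 hb) (h1.trans h2.symm)

end Cut

lemma chain'_of_wsteps {R : V → V → Prop} {L : List V}
    (h : ∀ p ∈ wsteps L, R p.1 p.2) : L.Chain' R := by
  change List.IsChain R L
  rw [List.isChain_iff_getElem]
  intro i hi
  exact h (L.get ⟨i, by omega⟩, L.get ⟨i + 1, by omega⟩)
    (mem_wsteps_iff.2 ⟨i, by omega, by simp, by simp⟩)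

lemma chain_reach {H' : SimpleGraph V} :
    ∀ {l : List V} {a : V}, (a :: l).Chain' H'.Adj → ∀ c ∈ a :: l, H'.Reachable a c := by
  intro l
  induction l with
  | nil => intro a _ c hc; simp at hc; subst hc; exact SimpleGraph.Reachable.refl _
  | cons b t ih =>
    intro a hch c hc
    rcases List.isChain_cons_cons.1 hch with ⟨hab, ht⟩
    rcases List.mem_cons.1 hc with rfl | hc'
    · exact SimpleGraph.Reachable.refl _
    · exact hab.reachable.trans (ih ht c hc')

lemma wsteps_append_cons (l1 : List V) (z : V) (l2 : List V) :
    wsteps (l1 ++ z :: l2) = wsteps (l1 ++ [z]) ++ wsteps (z :: l2) := by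
  induction l1 with
  | nil => simp [wsteps_singleton]
  | cons a t ih =>
    cases t with
    | nil => simp [wsteps, List.zip]
    | cons b t' =>
      simp only [List.cons_append] at ih ⊢
      rw [wsteps_cons_cons, wsteps_cons_cons]
      simp only [List.cons_append] at ih ⊢
      rw [ih]

lemma detour_wsteps (A B : List V) (z w : V) :
    wsteps (A ++ z :: w :: z :: B) =
      wsteps (A ++ [z]) ++ (z, w) :: (w, z) :: wsteps (z :: B) := by
  rw [wsteps_append_cons, wsteps_cons_cons, wsteps_cons_cons]

lemma detour_isWalk {G : SimpleGraph V} {A B : List V} {z w : V} (hadj : G.Adj z w)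
    (h : IsWalk G (A ++ z :: B)) : IsWalk G (A ++ z :: w :: z :: B) := by
  refine ⟨by simp, ?_⟩
  rw [detour_wsteps]
  have h2 := h.2
  rw [wsteps_append_cons] at h2
  intro p hp
  rcases List.mem_append.1 hp with h' | h'
  · exact h2 p (List.mem_append.2 (Or.inl h'))
  · rcases List.mem_cons.1 h' with rfl | h'
    · exact Or.inr hadj
    · rcases List.mem_cons.1 h' with rfl | h'
      · exact Or.inr hadj.symm
      · exact h2 p (List.mem_append.2 (Or.inr h'))

lemma detour_wlen [DecidableEq V] {A B : List V} {z w : V} (hzw : z ≠ w) :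
    wlen (A ++ z :: w :: z :: B) = wlen (A ++ z :: B) + 2 := by
  unfold wlen
  rw [detour_wsteps, wsteps_append_cons A z B]
  simp [List.countP_append, List.countP_cons, hzw, Ne.symm hzw]
  omega

lemma detour_mem {A B : List V} {z w x : V} :
    x ∈ A ++ z :: w :: z :: B ↔ x ∈ A ++ z :: B ∨ x = w := by
  simp only [List.mem_append, List.mem_cons]
  tauto

lemma detour_head? {A B : List V} {z w : V} :
    (A ++ z :: w :: z :: B).head? = (A ++ z :: B).head? := by
  cases A <;> simp

lemma exists_adj_boundary {G : SimpleGraph V} (hc : G.Preconnected) (Q : V → Prop)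
    {c v0 : V} (hQc : Q c) (hv0 : ¬ Q v0) :
    ∃ z w, G.Adj z w ∧ Q z ∧ ¬ Q w := by
  obtain ⟨p⟩ := hc c v0
  clear hc
  induction p with
  | nil => exact absurd hQc hv0
  | @cons a b v' hab p ih =>
    by_cases hb : Q b
    · exact ih hb hv0
    · exact ⟨a, b, hab, hQc, hb⟩

lemma cover_extend [Fintype V] [DecidableEq V] {G : SimpleGraph V} (hc : G.Preconnected)
    {k : ℕ} (hk : 0 < k) (S : Fin k → List V) (hW : ∀ i, IsWalk G (S i)) :
    ∃ S' : Fin k → List V, (∀ i, IsWalk G (S' i)) ∧ Covers S' ∧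
      (∀ i, (S' i).head? = (S i).head?) ∧
      slen S' = slen S + 2 * (univ.filter (fun v => ∀ i, v ∉ S i)).card := by
  generalize hn : (univ.filter (fun v => ∀ i, v ∉ S i)).card = n
  induction n generalizing S with
  | zero =>
    refine ⟨S, hW, ?_, fun i => rfl, by omega⟩
    intro v
    by_contra hv
    push_neg at hv
    have : v ∈ univ.filter (fun v => ∀ i, v ∉ S i) := by
      simp only [mem_filter, mem_univ, true_and]; exact hv
    rw [Finset.card_eq_zero] at hn
    simp [hn] at this
  | succ n ih =>
    have hne : (univ.filter (fun v => ∀ i, v ∉ S i)).Nonempty := by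
      rw [← Finset.card_pos, hn]; omega
    obtain ⟨v0, hv0⟩ := hne
    rw [mem_filter] at hv0
    have hv0' : ∀ i, v0 ∉ S i := hv0.2
    set i0 : Fin k := ⟨0, hk⟩
    have hS0 : S i0 ≠ [] := (hW i0).1
    have hQc : ∃ i, (S i0).head hS0 ∈ S i := ⟨i0, List.head_mem hS0⟩
    have hnQ : ¬ ∃ j, v0 ∈ S j := by push_neg; exact hv0'
    obtain ⟨z, w, hzw, hQz, hQw⟩ :=
      exists_adj_boundary hc (fun v => ∃ i, v ∈ S i) hQc hnQ
    obtain ⟨i, hz⟩ := hQz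
    obtain ⟨A, B, hAB⟩ := List.append_of_mem hz
    set newW : List V := A ++ z :: w :: z :: B with hnewW
    set S1 : Fin k → List V := Function.update S i newW with hS1
    have hS1i : S1 i = newW := Function.update_self i newW S
    have hS1ne : ∀ j, j ≠ i → S1 j = S j := fun j hj => Function.update_of_ne hj newW S
    have hwalk1 : ∀ j, IsWalk G (S1 j) := by
      intro j
      by_cases hj : j = i
      · subst hj; rw [hS1i]; exact detour_isWalk hzw (hAB ▸ hW j)
      · rw [hS1ne j hj]; exact hW j
    have hhead1 : ∀ j, (S1 j).head? = (S j).head? := by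
      intro j
      by_cases hj : j = i
      · subst hj; rw [hS1i, hAB, hnewW]; exact detour_head?
      · rw [hS1ne j hj]
    have hmem1 : ∀ x j, (x ∈ S1 j ↔ x ∈ S j ∨ (j = i ∧ x = w)) := by
      intro x j
      by_cases hj : j = i
      · subst hj; rw [hS1i, hnewW, detour_mem, ← hAB]; tauto
      · rw [hS1ne j hj]; tauto
    have hslen1 : slen S1 = slen S + 2 := by
      have key : ∀ j, wlen (S1 j) = wlen (S j) + (if j = i then 2 else 0) := by
        intro j
        by_cases hj : j = i
        · subst hj; rw [hS1i, hnewW, hAB]; simp [detour_wlen hzw.ne]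
        · simp [hS1ne j hj, hj]
      unfold slen
      simp only [key, Finset.sum_add_distrib, Finset.sum_ite_eq' Finset.univ i]
      simp
    have hfilter : univ.filter (fun v => ∀ j, v ∉ S1 j) =
        (univ.filter (fun v => ∀ j, v ∉ S j)).erase w := by
      ext x
      simp only [mem_erase, mem_filter, mem_univ, true_and]
      constructor
      · intro h
        refine ⟨fun hx => (h i) ?_, fun j hx => h j ((hmem1 x j).2 (Or.inl hx))⟩
        exact (hmem1 x i).2 (Or.inr ⟨rfl, hx⟩)
      · rintro ⟨hxw, h⟩ j hx
        rcases (hmem1 x j).1 hx with hx' | ⟨rfl, rfl⟩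
        · exact h j hx'
        · exact hxw rfl
    have hwmem : w ∈ univ.filter (fun v => ∀ j, v ∉ S j) := by
      simp only [mem_filter, mem_univ, true_and]
      push_neg at hQw
      exact hQw
    have hcard1 : (univ.filter (fun v => ∀ j, v ∉ S1 j)).card = n := by
      rw [hfilter, Finset.card_erase_of_mem hwmem, hn]
      omega
    obtain ⟨S', hW', hC', hH', hL'⟩ := ih S1 hwalk1 hcard1
    refine ⟨S', hW', hC', fun j => (hH' j).trans (hhead1 j), ?_⟩
    rw [hL', hslen1]
    ring

lemma wsteps_nodup {P : List V} (hP : P.Nodup) : (wsteps P).Nodup := by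
  rw [List.nodup_iff_injective_get]
  intro i j hij
  unfold wsteps at i j hij
  have hi : (i : ℕ) < P.length := by
    have := i.2; simp [List.length_zip, List.length_tail] at this; omega
  have hj : (j : ℕ) < P.length := by
    have := j.2; simp [List.length_zip, List.length_tail] at this; omega
  have : P[(i : ℕ)] = P[(j : ℕ)] := by
    have := congrArg Prod.fst hij
    simpa [List.get_eq_getElem, List.getElem_zip] using this
  have := (hP.getElem_inj_iff (hi := hi) (hj := hj)).1 this
  exact Fin.ext this

/-- The number of traversals of the edge `e` by the walk `W`. -/
def eTrav [DecidableEq V] (W : List V) (e : Sym2 V) : ℕ :=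
  (wsteps W).countP (fun p => decide (p.1 ≠ p.2 ∧ s(p.1, p.2) = e))

lemma wlen_eq_sum_eTrav [Fintype V] [DecidableEq V] (W : List V) :
    wlen W = ∑ e : Sym2 V, eTrav W e := by
  unfold wlen eTrav
  induction wsteps W with
  | nil => simp
  | cons a l ih =>
    simp only [List.countP_cons]
    rw [ih, Finset.sum_add_distrib]
    by_cases ha : a.1 = a.2
    · simp [ha]
    · have : ∀ e : Sym2 V,
          (if (decide (a.1 ≠ a.2 ∧ s(a.1, a.2) = e)) = true then 1 else 0) =
          (if s(a.1, a.2) = e then 1 else 0) := by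
        intro e; by_cases he : s(a.1, a.2) = e <;> simp [he, ha]
      simp only [this]
      rw [Finset.sum_ite_eq (Finset.univ : Finset (Sym2 V)) (s(a.1, a.2))
        (fun _ => 1)]
      simp [ha]

lemma eTrav_eq_crossN [DecidableEq V] {G : SimpleGraph V} {W : List V} (hW : IsWalk G W)
    {e : Sym2 V} {s : V → Bool}
    (hside : ∀ p q : V, G.Adj p q → ((s p ≠ s q) ↔ s(p, q) = e)) :
    eTrav W e = crossN s W := by
  unfold eTrav crossN
  apply List.countP_congr
  intro p hp
  rcases hW.2 p hp with heq | hadj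
  · simp [heq]
  · have := hside p.1 p.2 hadj
    by_cases hd : s p.1 = s p.2
    · have : ¬ (s(p.1, p.2) = e) := fun h => (this.2 h) hd
      simp [hd, this]
    · have he : s(p.1, p.2) = e := this.1 hd
      simp [hd, he, hadj.ne]

lemma cut_side [DecidableEq V] {G : SimpleGraph V} (hT : G.IsTree) {x y : V}
    (hxy : G.Adj x y) :
    ∃ sd : V → Bool, sd x = true ∧ sd y = false ∧
      (∀ p q : V, G.Adj p q → ((sd p ≠ sd q) ↔ s(p, q) = s(x, y))) ∧
      (∀ z, sd z = true ↔ (delE G (s(x, y))).Reachable x z) := by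
  classical
  have hnxy : ¬ (delE G (s(x, y))).Reachable x y :=
    fun hR => cut_not_both hT.2 hxy ⟨hR, SimpleGraph.Reachable.refl _⟩
  refine ⟨fun z => decide ((delE G (s(x, y))).Reachable x z),
    by simpa using SimpleGraph.Reachable.refl x, by simpa using hnxy, ?_, by simp⟩
  intro p q hpq
  constructor
  · intro hne
    by_contra he
    have hadj : (delE G (s(x, y))).Adj p q := delE_adj.2 ⟨hpq, he⟩
    apply hne
    simp only [decide_eq_decide]
    exact ⟨fun h => h.trans hadj.reachable, fun h => h.trans hadj.symm.reachable⟩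
  · intro he
    rcases Sym2.eq_iff.1 he with ⟨rfl, rfl⟩ | ⟨rfl, rfl⟩
    · intro h
      rw [decide_eq_decide] at h
      exact hnxy (h.1 (SimpleGraph.Reachable.refl _))
    · intro h
      rw [decide_eq_decide] at h
      exact hnxy (h.2 (SimpleGraph.Reachable.refl _))

lemma exists_parent [DecidableEq V] {G : SimpleGraph V} (hT : G.IsTree) {x u : V}
    (hxu : x ≠ u) :
    ∃ z, G.Adj x z ∧ ¬ (delE G (s(x, z))).Reachable x u := by
  obtain ⟨w0⟩ := hT.isConnected x u
  have hqp : (w0.toPath : G.Walk x u).IsPath := w0.toPath.2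
  cases hq2 : (w0.toPath : G.Walk x u) with
  | nil => exact absurd rfl hxu
  | @cons _ b _ h p =>
    refine ⟨b, h, ?_⟩
    intro hR
    have hxs : x ∉ p.support := by
      rw [hq2] at hqp
      exact ((SimpleGraph.Walk.cons_isPath_iff h p).1 hqp).2
    have hsub : ∀ e ∈ p.edges, e ∈ (delE G (s(x, b))).edgeSet := by
      intro e he
      induction e with
      | h c d =>
        rw [SimpleGraph.mem_edgeSet, delE_adj]
        refine ⟨p.adj_of_mem_edges he, fun hcd => hxs ?_⟩
        rw [show (s(c, d) : Sym2 V) = s(c, d) from rfl, hcd] at he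
        exact p.fst_mem_support_of_mem_edges he
    have hRbu : (delE G (s(x, b))).Reachable b u := ⟨p.transfer _ hsub⟩
    exact cut_not_both hT.2 h ⟨hR.trans hRbu.symm, SimpleGraph.Reachable.refl _⟩

lemma eTrav_path_self [DecidableEq V] {P : List V} (hP : P.Nodup) {a b : V} (hab : a ≠ b)
    (hmem : (a, b) ∈ wsteps P) : eTrav P (s(a, b)) = 1 := by
  unfold eTrav
  have hcongr : ∀ q ∈ wsteps P,
      (decide (q.1 ≠ q.2 ∧ s(q.1, q.2) = s(a, b)) = true) ↔
        (decide (q = (a, b)) = true) := by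
    intro q hq
    simp only [decide_eq_true_eq]
    constructor
    · rintro ⟨hne, he⟩
      rcases Sym2.eq_iff.1 he with ⟨h1, h2⟩ | ⟨h1, h2⟩
      · exact Prod.ext h1 h2
      · exfalso
        exact not_rev_steps hP hmem (by rw [← h1, ← h2]; exact Prod.mk.eta ▸ hq)
    · rintro rfl
      exact ⟨hab, rfl⟩
  rw [List.countP_congr hcongr]
  rw [← List.count_eq_one_of_mem (wsteps_nodup hP) hmem, List.count_eq_countP]
  exact List.countP_congr (fun q _ => by simp)

lemma eTrav_path_zero [DecidableEq V] {P : List V} {w z : V} (hw : w ∉ P) :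
    eTrav P (s(w, z)) = 0 := by
  unfold eTrav
  rw [List.countP_eq_zero]
  intro q hq
  simp only [decide_eq_true_eq, not_and]
  intro _ he
  rcases Sym2.eq_iff.1 he with ⟨h1, _⟩ | ⟨_, h2⟩
  · exact absurd ((mem_of_wsteps hq).1) (h1 ▸ hw)
  · exact absurd ((mem_of_wsteps hq).2) (h2 ▸ hw)

lemma crossN_parity' (s : V → Bool) {W : List V} (h : W ≠ []) :
    crossN s W % 2 = if s (W.head h) = s (W.getLast h) then 0 else 1 := by
  obtain ⟨a, t, rfl⟩ : ∃ a t, W = a :: t := ⟨W.head h, W.tail, (List.cons_head_tail h).symm⟩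
  exact crossN_parity s t a

lemma crossN_pos' (s : V → Bool) {W : List V} (h : W ≠ []) {b : V} (hb : b ∈ W)
    (hs : s b ≠ s (W.head h)) : 1 ≤ crossN s W := by
  obtain ⟨a, t, rfl⟩ : ∃ a t, W = a :: t := ⟨W.head h, W.tail, (List.cons_head_tail h).symm⟩
  exact crossN_pos s hb (by simpa using hs)

lemma walk_bound [Fintype V] [DecidableEq V] {G : SimpleGraph V} (hT : G.IsTree)
    {W : List V} (hW : IsWalk G W) :
    ∃ P : List V, P.Nodup ∧ P.Chain' G.Adj ∧ P.head? = W.head? ∧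
      wlen P + 2 * (univ.filter (fun x => x ∈ W ∧ x ∉ P)).card ≤ wlen W := by
  classical
  have hne : W ≠ [] := hW.1
  set u := W.head hne with hu
  set v := W.getLast hne with hv
  have p0 : G.Walk u v := (hT.isConnected.preconnected u v).some
  set PW := p0.toPath with hPW
  set P := (PW : G.Walk u v).support with hP
  have hnodup : P.Nodup := PW.2.support_nodup
  have hchain : P.Chain' G.Adj := SimpleGraph.Walk.isChain_adj_support _
  have hPne : P ≠ [] := SimpleGraph.Walk.support_ne_nil _
  have hPwalk : IsWalk G P := ⟨hPne, fun p hp => Or.inr (chain'_wsteps hchain p hp)⟩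
  have hheadP : P.head hPne = u := SimpleGraph.Walk.head_support _
  have hlastP : P.getLast hPne = v := by
    exact SimpleGraph.Walk.getLast_support (PW : G.Walk u v)
  have huP : u ∈ P := hheadP ▸ List.head_mem hPne
  have hxu : ∀ x, x ∉ P → x ≠ u := fun x hx h => hx (h ▸ huP)
  have hpar0 : ∀ x : V, ∃ z, x ∉ P →
      G.Adj x z ∧ ¬ (delE G (s(x, z))).Reachable x u := by
    intro x
    by_cases hx : x ∉ P
    · obtain ⟨z, h1, h2⟩ := exists_parent hT (hxu x hx)
      exact ⟨z, fun _ => ⟨h1, h2⟩⟩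
    · exact ⟨x, fun h => absurd h hx⟩
  choose par hparspec using hpar0
  -- Key 1 : each edge of P is traversed at least once by W
  have key1 : ∀ a b : V, (a, b) ∈ wsteps P → 1 ≤ eTrav W (s(a, b)) := by
    intro a b hab
    have hadj : G.Adj a b := chain'_wsteps hchain _ hab
    obtain ⟨sd, hsa, hsb, hprop, hiff⟩ := cut_side hT hadj
    have h1 : eTrav P (s(a, b)) = crossN sd P := eTrav_eq_crossN hPwalk hprop
    have h2 : eTrav P (s(a, b)) = 1 := eTrav_path_self hnodup hadj.ne hab
    have hpar : crossN sd P % 2 = if sd (P.head hPne) = sd (P.getLast hPne) then 0 else 1 :=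
      crossN_parity' sd hPne
    rw [← h1, h2, hheadP, hlastP] at hpar
    have hsuv : sd u ≠ sd v := by
      by_contra h
      simp [h] at hpar
    have hWpar : crossN sd W % 2 = if sd u = sd v then 0 else 1 := crossN_parity' sd hne
    rw [if_neg hsuv] at hWpar
    have := eTrav_eq_crossN hW hprop (e := s(a, b))
    omega
  -- Key 2 : for x visited by W but off P, the parent edge is traversed at least twice
  have key2 : ∀ x : V, x ∈ W → x ∉ P → 2 ≤ eTrav W (s(x, par x)) := by
    intro x hxW hxP
    obtain ⟨hadj, hreach⟩ := hparspec x hxP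
    obtain ⟨sd, hsx, hsz, hprop, hiff⟩ := cut_side hT hadj
    have hsu : sd u = false := by
      cases h : sd u
      · rfl
      · exact absurd ((hiff u).1 h) hreach
    have h1 : eTrav P (s(x, par x)) = crossN sd P := eTrav_eq_crossN hPwalk hprop
    have h2 : eTrav P (s(x, par x)) = 0 := eTrav_path_zero hxP
    have hpar : crossN sd P % 2 = if sd (P.head hPne) = sd (P.getLast hPne) then 0 else 1 :=
      crossN_parity' sd hPne
    rw [← h1, h2, hheadP, hlastP] at hpar
    have hsv : sd v = false := by
      by_cases h : sd u = sd v
      · rw [← h, hsu]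
      · simp [h] at hpar
    have hWpar : crossN sd W % 2 = if sd u = sd v then 0 else 1 := crossN_parity' sd hne
    rw [if_pos (by rw [hsu, hsv])] at hWpar
    have hpos : 1 ≤ crossN sd W := crossN_pos' sd hne hxW (by rw [hsx, ← hu, hsu]; simp)
    have := eTrav_eq_crossN hW hprop (e := s(x, par x))
    omega
  -- assemble
  refine ⟨P, hnodup, hchain, ?_, ?_⟩
  · rw [List.head?_eq_head hPne, List.head?_eq_head hne, hheadP]
  set D := univ.filter (fun x => x ∈ W ∧ x ∉ P) with hD
  set EP : Finset (Sym2 V) := ((wsteps P).map (fun q => s(q.1, q.2))).toFinset with hEP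
  set E2 : Finset (Sym2 V) := D.image (fun x => s(x, par x)) with hE2
  have hEPcard : EP.card = wlen P := by
    have hmapnodup : ((wsteps P).map (fun q => s(q.1, q.2))).Nodup := by
      refine List.Nodup.map_on ?_ (wsteps_nodup hnodup)
      intro q hq q' hq' he
      rcases Sym2.eq_iff.1 he with ⟨h1, h2⟩ | ⟨h1, h2⟩
      · exact Prod.ext h1 h2
      · exfalso
        apply not_rev_steps hnodup (x := q.1) (y := q.2) (Prod.mk.eta ▸ hq)
        have h3 : (q.2, q.1) = q' := Prod.ext h2 h1
        exact h3 ▸ hq'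
    rw [hEP, List.toFinset_card_of_nodup hmapnodup, List.length_map]
    symm
    exact List.countP_eq_length.2 fun q hq => by
      simpa using (chain'_wsteps hchain q hq).ne
  have hE2card : E2.card = D.card := by
    rw [hE2]
    apply Finset.card_image_of_injOn
    intro x hx y hy he
    have hx' : x ∈ W ∧ x ∉ P := by
      have := Finset.mem_coe.1 hx; rw [hD, mem_filter] at this; exact this.2
    have hy' : y ∈ W ∧ y ∉ P := by
      have := Finset.mem_coe.1 hy; rw [hD, mem_filter] at this; exact this.2
    have he' : (s(x, par x) : Sym2 V) = s(y, par y) := he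
    rcases Sym2.eq_iff.1 he' with ⟨h1, h2⟩ | ⟨h1, h2⟩
    · exact h1
    · exfalso
      obtain ⟨hax, hrx⟩ := hparspec x hx'.2
      obtain ⟨hay, hry⟩ := hparspec y hy'.2
      rcases cut_reach hT.isConnected.preconnected hax u with h | h
      · exact hrx h
      · rw [he', h2] at h
        exact hry h
  have hdisj : Disjoint EP E2 := by
    rw [Finset.disjoint_left]
    intro e heP heE
    rw [hEP, List.mem_toFinset, List.mem_map] at heP
    obtain ⟨q, hq, rfl⟩ := heP
    rw [hE2, Finset.mem_image] at heE
    obtain ⟨x, hx, hxe⟩ := heE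
    rw [hD, mem_filter] at hx
    have hmem := mem_of_wsteps hq
    rcases Sym2.eq_iff.1 hxe with ⟨h1, h2⟩ | ⟨h1, h2⟩
    · exact hx.2.2 (h1 ▸ hmem.1)
    · exact hx.2.2 (h1 ▸ hmem.2)
  have hbound1 : ∀ e ∈ EP, 1 ≤ eTrav W e := by
    intro e he
    rw [hEP, List.mem_toFinset, List.mem_map] at he
    obtain ⟨q, hq, rfl⟩ := he
    exact key1 q.1 q.2 (by rwa [Prod.mk.eta])
  have hbound2 : ∀ e ∈ E2, 2 ≤ eTrav W e := by
    intro e he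
    rw [hE2, Finset.mem_image] at he
    obtain ⟨x, hx, rfl⟩ := he
    rw [hD, mem_filter] at hx
    exact key2 x hx.2.1 hx.2.2
  calc wlen P + 2 * D.card = EP.card * 1 + E2.card * 2 := by rw [hEPcard, hE2card]; ring
    _ ≤ (∑ e ∈ EP, eTrav W e) + ∑ e ∈ E2, eTrav W e := by
        gcongr ?_ + ?_
        · simpa using Finset.card_nsmul_le_sum EP _ 1 hbound1
        · simpa using Finset.card_nsmul_le_sum E2 _ 2 hbound2
    _ = ∑ e ∈ EP ∪ E2, eTrav W e := (Finset.sum_union hdisj).symm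
    _ ≤ ∑ e : Sym2 V, eTrav W e :=
        Finset.sum_le_sum_of_subset (Finset.subset_univ _)
    _ = wlen W := (wlen_eq_sum_eTrav W).symm
/-- The minimum length of a covering strategy with k robots at given starts equals
the minimum over all k-tuples of paths with these starts of
Σ l(Pᵢ) + 2·|V(T) ∖ ∪ V(Pᵢ)|. -/
theorem stmt8 {V : Type*} [Fintype V] [DecidableEq V] (G : SimpleGraph V) (hT : G.IsTree)
    {k : ℕ} (hk : 1 ≤ k) (start : Fin k → V) :
    sInf {L : ℕ | ∃ S : Fin k → List V, (∀ i, IsWalk G (S i)) ∧ Covers S ∧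
        (∀ i, (S i).head? = some (start i)) ∧ slen S = L} =
    sInf {L : ℕ | ∃ P : Fin k → List V,
        (∀ i, (P i).Nodup ∧ (P i).Chain' G.Adj ∧ (P i).head? = some (start i)) ∧
        (∑ i, wlen (P i)) +
          2 * (Finset.univ.filter (fun v : V => ∀ i, v ∉ P i)).card = L} := by
  classical
  set SA := {L : ℕ | ∃ S : Fin k → List V, (∀ i, IsWalk G (S i)) ∧ Covers S ∧
      (∀ i, (S i).head? = some (start i)) ∧ slen S = L} with hSA
  set SB := {L : ℕ | ∃ P : Fin k → List V,
      (∀ i, (P i).Nodup ∧ (P i).Chain' G.Adj ∧ (P i).head? = some (start i)) ∧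
      (∑ i, wlen (P i)) +
        2 * (Finset.univ.filter (fun v : V => ∀ i, v ∉ P i)).card = L} with hSB
  -- walks from path data
  have pathWalk : ∀ (P : Fin k → List V),
      (∀ i, (P i).Nodup ∧ (P i).Chain' G.Adj ∧ (P i).head? = some (start i)) →
      ∀ i, IsWalk G (P i) := by
    intro P hP i
    refine ⟨fun h => ?_, fun p hp => Or.inr (chain'_wsteps (hP i).2.1 p hp)⟩
    have := (hP i).2.2
    rw [h] at this
    simp at this
  -- from any element of SB we get an element of SA with the same value
  have step2 : ∀ L ∈ SB, ∃ L' ∈ SA, L' = L := by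
    rintro L ⟨P, hP, rfl⟩
    obtain ⟨S', hW', hC', hH', hL'⟩ :=
      cover_extend hT.isConnected.preconnected hk P (pathWalk P hP)
    refine ⟨slen S', ⟨S', hW', hC', fun i => (hH' i).trans (hP i).2.2, rfl⟩, ?_⟩
    rw [hL']
    rfl
  have hSBne : SB.Nonempty := by
    refine ⟨_, ⟨fun i => [start i], fun i => ⟨by simp, by simp [List.Chain'], rfl⟩, rfl⟩⟩
  have hSAne : SA.Nonempty := by
    obtain ⟨L, hL⟩ := hSBne
    obtain ⟨L', hL', _⟩ := step2 L hL
    exact ⟨L', hL'⟩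
  -- lower bound direction
  have step4 : ∀ L ∈ SA, sInf SB ≤ L := by
    rintro L ⟨S, hSwalk, hScov, hShead, rfl⟩
    choose P h1 h2 h3 h4 using fun i => walk_bound hT (hSwalk i)
    have hPhead : ∀ i, (P i).head? = some (start i) := fun i => (h3 i).trans (hShead i)
    set M := (∑ i, wlen (P i)) +
        2 * (Finset.univ.filter (fun v : V => ∀ i, v ∉ P i)).card with hM
    have hMB : M ∈ SB := ⟨P, fun i => ⟨h1 i, h2 i, hPhead i⟩, rfl⟩
    have hcard : (Finset.univ.filter (fun v : V => ∀ i, v ∉ P i)).card ≤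
        ∑ i, (Finset.univ.filter (fun x => x ∈ S i ∧ x ∉ P i)).card := by
      have hsub : Finset.univ.filter (fun v : V => ∀ i, v ∉ P i) ⊆
          Finset.univ.biUnion (fun i => Finset.univ.filter (fun x => x ∈ S i ∧ x ∉ P i)) := by
        intro x hx
        rw [mem_filter] at hx
        obtain ⟨i, hi⟩ := hScov x
        exact Finset.mem_biUnion.2 ⟨i, Finset.mem_univ i,
          mem_filter.2 ⟨Finset.mem_univ x, hi, hx.2 i⟩⟩
      exact le_trans (Finset.card_le_card hsub) (Finset.card_biUnion_le)
    have hMle : M ≤ slen S := by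
      calc M ≤ (∑ i, wlen (P i)) +
            2 * ∑ i, (Finset.univ.filter (fun x => x ∈ S i ∧ x ∉ P i)).card := by
              rw [hM]; omega
        _ = ∑ i, (wlen (P i) +
            2 * (Finset.univ.filter (fun x => x ∈ S i ∧ x ∉ P i)).card) := by
              rw [Finset.sum_add_distrib, Finset.mul_sum]
        _ ≤ ∑ i, wlen (S i) := Finset.sum_le_sum fun i _ => h4 i
        _ = slen S := rfl
    exact le_trans (Nat.sInf_le hMB) hMle
  apply le_antisymm
  · apply le_csInf hSBne
    intro L hL
    obtain ⟨L', hL', rfl⟩ := step2 L hL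
    exact Nat.sInf_le hL'
  · exact le_csInf hSAne step4
end
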